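/- Let R be a right noetherian ring with right Krull dimension α, let T be a right weakly ideal invariant ideal with |R/T|_r = α, and let M be a finitely generated right R-module of Krull dimension α. If H is an essential submodule of M that is α-Krull-homogeneous with HT = 0 and |M/H|_r < α, then MT = 0. -/

import Mathlib

universe u

/-- Gabriel–Rentschler deviation: `M` has Krull dimension `≤ α`: every descending chain of
submodules has all but finitely many factors of Krull dimension `< α`. -/
def KdimLE (R : Type u) [Ring R] (α : Ordinal.{u}) (M : Type u)
    [AddCommGroup M] [Module R M] : Prop :=
  ∀ f : ℕ → Submodule R M, (∀ n, f (n + 1) ≤ f n) →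
    ∃ N : ℕ, ∀ n ≥ N, f n = f (n + 1) ∨
      ∃ β : {γ : Ordinal.{u} // γ < α},
        KdimLE R β.1 (↥(f n) ⧸ (f (n + 1)).comap (f n).subtype)
termination_by α
decreasing_by exact β.2

open Classical in
/-- The Gabriel–Rentschler Krull dimension of a module (`⊥` for the zero module).
For a right module take `R := Sᵐᵒᵖ`. -/
noncomputable def kdim (R : Type u) [Ring R] (M : Type u)
    [AddCommGroup M] [Module R M] : WithBot Ordinal.{u} :=
  if Subsingleton M then ⊥ else ↑(sInf {α : Ordinal.{u} | KdimLE R α M})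

/-- `M` is a Krull-homogeneous `R`-module of Krull dimension `α`:
every nonzero submodule has Krull dimension `α`. -/
def IsKrullHomogeneous (R : Type u) [Ring R] (M : Type u) [AddCommGroup M]
    [Module R M] (α : WithBot Ordinal.{u}) : Prop :=
  ∀ N : Submodule R M, N ≠ ⊥ → kdim R ↥N = α

namespace TwoSidedIdeal

/-- The underlying right ideal of a two-sided ideal. -/
def rightIdeal {R : Type u} [Ring R] (P : TwoSidedIdeal R) :
    Submodule Rᵐᵒᵖ R where
  carrier := P
  add_mem' := P.add_mem
  zero_mem' := P.zero_mem
  smul_mem' := fun _ _ hx => P.mul_mem_right _ _ hx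

/-- A two-sided ideal `P` is prime: `P ≠ R` and `aRb ⊆ P` implies `a ∈ P` or `b ∈ P`. -/
def IsPrime {R : Type u} [Ring R] (P : TwoSidedIdeal R) : Prop :=
  P ≠ ⊤ ∧ ∀ a b : R, (∀ r : R, a * r * b ∈ P) → a ∈ P ∨ b ∈ P

/-- A two-sided ideal `P` is semiprime: `aRa ⊆ P` implies `a ∈ P`. -/
def IsSemiprime {R : Type u} [Ring R] (P : TwoSidedIdeal R) : Prop :=
  ∀ a : R, (∀ r : R, a * r * a ∈ P) → a ∈ P

/-- A minimal prime of `R`. -/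
def IsMinimalPrime {R : Type u} [Ring R] (P : TwoSidedIdeal R) : Prop :=
  P.IsPrime ∧ ∀ Q : TwoSidedIdeal R, Q.IsPrime → Q ≤ P → Q = P

/-- `I ^ n = 0`, phrased as: every product of `n` elements of `I` vanishes. -/
def PowEqZero {R : Type u} [Ring R] (I : TwoSidedIdeal R) (n : ℕ) : Prop :=
  ∀ f : Fin n → R, (∀ i, f i ∈ I) → (List.ofFn f).prod = 0

end TwoSidedIdeal

/-- The right ideal `L·T` generated by products `l * t`, `l ∈ L`, `t ∈ T`. -/
def mulSpan {R : Type u} [Ring R] (L : Submodule Rᵐᵒᵖ R) (T : TwoSidedIdeal R) :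
    Submodule Rᵐᵒᵖ R :=
  Submodule.span Rᵐᵒᵖ {x : R | ∃ l ∈ L, ∃ t ∈ T, x = l * t}

/-- `c` is regular modulo `P`: its image in `R/P` is neither a left nor a right
zero divisor. -/
def IsRegularMod {R : Type u} [Ring R] (P : TwoSidedIdeal R) (c : R) : Prop :=
  ∀ x : R, (c * x ∈ P → x ∈ P) ∧ (x * c ∈ P → x ∈ P)

section Aux

variable {R : Type u} [Ring R]

/-- Krull dimension bound transfers along injective linear maps. -/
theorem kdimLE_of_injective : ∀ (α : Ordinal.{u}) {M N : Type u} [AddCommGroup M] [Module R M]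
    [AddCommGroup N] [Module R N] (f : N →ₗ[R] M), Function.Injective f →
    KdimLE R α M → KdimLE R α N := by
  intro α
  induction α using Ordinal.induction with
  | h α IH =>
    intro M N _ _ _ _ f hf hM
    rw [KdimLE] at hM ⊢
    intro g hg
    obtain ⟨K, hK⟩ := hM (fun n => (g n).map f) (fun n => Submodule.map_mono (hg n))
    refine ⟨K, fun n hn => ?_⟩
    rcases hK n hn with h | ⟨β, hβ⟩
    · exact Or.inl (Submodule.map_injective_of_injective hf h)
    · refine Or.inr ⟨β, ?_⟩
      set p := (g (n + 1)).comap (g n).subtype with hp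
      let m1 : ↥(g n) →ₗ[R]
          (↥((g n).map f) ⧸ (((g (n + 1)).map f)).comap ((g n).map f).subtype) :=
        (Submodule.mkQ _).comp (Submodule.equivMapOfInjective f hf (g n)).toLinearMap
      have hker : LinearMap.ker m1 = p := by
        ext y
        constructor
        · intro hy
          have hy' : (↑(Submodule.equivMapOfInjective f hf (g n) y) : M) ∈ (g (n + 1)).map f := by
            simpa [m1, Submodule.Quotient.mk_eq_zero] using hy
          rw [Submodule.coe_equivMapOfInjective_apply] at hy'
          obtain ⟨z, hz, hzeq⟩ := hy'
          have hzy : z = (y : N) := hf hzeq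
          have : (y : N) ∈ g (n + 1) := hzy ▸ hz
          simpa [hp] using this
        · intro hy
          have hy1 : (y : N) ∈ g (n + 1) := by simpa [hp] using hy
          have : (↑(Submodule.equivMapOfInjective f hf (g n) y) : M) ∈ (g (n + 1)).map f := by
            rw [Submodule.coe_equivMapOfInjective_apply]
            exact ⟨y, hy1, rfl⟩
          simpa [m1, Submodule.Quotient.mk_eq_zero] using this
      have hinj : Function.Injective (Submodule.liftQ p m1 (le_of_eq hker.symm)) :=
        LinearMap.ker_eq_bot.mp (Submodule.ker_liftQ_eq_bot _ _ _ (le_of_eq hker))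
      exact IH β.1 β.2 _ hinj hβ

/-- Krull dimension bound transfers along surjective linear maps. -/
theorem kdimLE_of_surjective (α : Ordinal.{u}) {M N : Type u} [AddCommGroup M] [Module R M]
    [AddCommGroup N] [Module R N] (f : M →ₗ[R] N) (hf : Function.Surjective f)
    (hM : KdimLE R α M) : KdimLE R α N := by
  rw [KdimLE] at hM ⊢
  intro g hg
  obtain ⟨K, hK⟩ := hM (fun n => (g n).comap f) (fun n => Submodule.comap_mono (hg n))
  refine ⟨K, fun n hn => ?_⟩
  rcases hK n hn with h | ⟨β, hβ⟩
  · exact Or.inl (Submodule.comap_injective_of_surjective hf h)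
  · refine Or.inr ⟨β, ?_⟩
    set p := ((g (n + 1)).comap f).comap ((g n).comap f).subtype with hp
    let r : ↥((g n).comap f) →ₗ[R] ↥(g n) :=
      f.restrict (p := (g n).comap f) (q := g n) (fun x hx => hx)
    let m1 : ↥((g n).comap f) →ₗ[R] (↥(g n) ⧸ (g (n + 1)).comap (g n).subtype) :=
      (Submodule.mkQ _).comp r
    have hker : LinearMap.ker m1 = p := by
      ext y
      simp only [m1, r, LinearMap.mem_ker, LinearMap.comp_apply, Submodule.mkQ_apply,
        Submodule.Quotient.mk_eq_zero, Submodule.mem_comap, LinearMap.restrict_apply, hp]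
      rfl
    have hm1 : Function.Surjective m1 := by
      have hr : Function.Surjective r := by
        rintro ⟨y, hy⟩
        obtain ⟨z, rfl⟩ := hf y
        exact ⟨⟨z, hy⟩, rfl⟩
      exact (Submodule.mkQ_surjective _).comp hr
    have hbij : Function.Bijective (Submodule.liftQ p m1 (le_of_eq hker.symm)) := by
      constructor
      · exact LinearMap.ker_eq_bot.mp (Submodule.ker_liftQ_eq_bot _ _ _ (le_of_eq hker))
      · intro z
        obtain ⟨w, hw⟩ := hm1 z
        exact ⟨Submodule.Quotient.mk w, by simpa [Submodule.liftQ_apply] using hw⟩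
    exact kdimLE_of_injective β.1
      ((LinearEquiv.ofBijective _ hbij).symm.toLinearMap) (LinearEquiv.ofBijective _ hbij).symm.injective hβ

/-- Every noetherian module has a Krull dimension bound (Gabriel–Rentschler). -/
theorem exists_kdimLE (M : Type u) [AddCommGroup M] [Module R M] [IsNoetherian R M] :
    ∃ α : Ordinal.{u}, KdimLE R α M := by
  classical
  have key : ∀ N : Submodule R M, ∃ α : Ordinal.{u}, KdimLE R α (M ⧸ N) := by
    have wf : WellFounded ((· > ·) : Submodule R M → Submodule R M → Prop) :=
      (inferInstance : WellFoundedGT (Submodule R M)).wf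
    intro N₀
    refine wf.induction (C := fun N => ∃ α : Ordinal.{u}, KdimLE R α (M ⧸ N)) N₀ ?_
    intro N IH
    have hch : ∀ i : {N' : Submodule R M // N < N'}, ∃ α : Ordinal.{u}, KdimLE R α (M ⧸ i.1) :=
      fun i => IH i.1 i.2
    choose γ hγ using hch
    refine ⟨(⨆ i, γ i) + 1, ?_⟩
    rw [KdimLE]
    intro f hf
    have hanti : Antitone f := antitone_nat_of_succ_le hf
    by_cases hb : ∃ n, f n = ⊥
    · obtain ⟨n0, h0⟩ := hb
      refine ⟨n0, fun n hn => Or.inl ?_⟩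
      have h1 : f n = ⊥ := le_bot_iff.mp (h0 ▸ hanti hn)
      have h2 : f (n + 1) = ⊥ := le_bot_iff.mp (h0 ▸ hanti (hn.trans n.le_succ))
      rw [h1, h2]
    · push_neg at hb
      refine ⟨0, fun n _ => Or.inr ?_⟩
      set N' := (f (n + 1)).comap N.mkQ with hN'
      have hle : N ≤ N' := by
        intro y hy
        have : N.mkQ y = 0 := (Submodule.Quotient.mk_eq_zero N).mpr hy
        simp only [N', Submodule.mem_comap, this]
        exact (f (n + 1)).zero_mem
      have hmap : Submodule.map N.mkQ N' = f (n + 1) :=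
        Submodule.map_comap_eq_of_surjective (Submodule.mkQ_surjective N) _
      have hne : N ≠ N' := by
        intro h
        apply hb (n + 1)
        rw [← hmap, ← h, Submodule.mkQ_map_self]
      have hNN' : N < N' := lt_of_le_of_ne hle hne
      have hγlt : γ ⟨N', hNN'⟩ < (⨆ i, γ i) + 1 := by
        refine lt_of_le_of_lt (le_ciSup (Ordinal.bddAbove_range _) _) ?_
        rw [Ordinal.add_one_eq_succ]
        exact Order.lt_succ _
      refine ⟨⟨γ ⟨N', hNN'⟩, hγlt⟩, ?_⟩
      let m1 : ↥(f n) →ₗ[R] ((M ⧸ N) ⧸ f (n + 1)) := (Submodule.mkQ _).comp (f n).subtype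
      have hker : LinearMap.ker m1 = (f (n + 1)).comap (f n).subtype := by
        ext y
        simp [m1, Submodule.Quotient.mk_eq_zero]
      have hinj1 : Function.Injective (Submodule.liftQ _ m1 (le_of_eq hker.symm)) :=
        LinearMap.ker_eq_bot.mp (Submodule.ker_liftQ_eq_bot _ _ _ (le_of_eq hker))
      have e2 : ((M ⧸ N) ⧸ f (n + 1)) ≃ₗ[R] (M ⧸ N') := by
        rw [← hmap]
        exact Submodule.quotientQuotientEquivQuotient N N' hle
      exact kdimLE_of_injective _ (e2.toLinearMap.comp (Submodule.liftQ _ m1 (le_of_eq hker.symm)))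
        (e2.injective.comp hinj1) (hγ ⟨N', hNN'⟩)
  obtain ⟨α, hα⟩ := key ⊥
  exact ⟨α, kdimLE_of_injective α (Submodule.quotEquivOfEqBot ⊥ rfl).symm.toLinearMap
    (LinearEquiv.injective _) hα⟩

/-- Monotonicity of `kdim` under injective maps (target having Krull dimension). -/
theorem kdim_le_of_injective {M N : Type u} [AddCommGroup M] [Module R M]
    [AddCommGroup N] [Module R N] (f : N →ₗ[R] M) (hf : Function.Injective f)
    (hM : ∃ γ : Ordinal.{u}, KdimLE R γ M) : kdim R N ≤ kdim R M := by
  classical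
  by_cases hN : Subsingleton N
  · rw [kdim, if_pos hN]
    exact bot_le
  · have hM' : ¬ Subsingleton M := fun h => hN ⟨fun a b => hf (Subsingleton.elim _ _)⟩
    rw [kdim, kdim, if_neg hN, if_neg hM']
    exact WithBot.coe_le_coe.mpr (csInf_le_csInf (OrderBot.bddBelow _) hM
      (fun γ hγ => kdimLE_of_injective γ f hf hγ))

/-- Monotonicity of `kdim` under surjective maps (source having Krull dimension). -/
theorem kdim_le_of_surjective {M N : Type u} [AddCommGroup M] [Module R M]
    [AddCommGroup N] [Module R N] (f : M →ₗ[R] N) (hf : Function.Surjective f)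
    (hM : ∃ γ : Ordinal.{u}, KdimLE R γ M) : kdim R N ≤ kdim R M := by
  classical
  by_cases hN : Subsingleton N
  · rw [kdim, if_pos hN]
    exact bot_le
  · have hM' : ¬ Subsingleton M := fun h => hN (hf.subsingleton)
    rw [kdim, kdim, if_neg hN, if_neg hM']
    exact WithBot.coe_le_coe.mpr (csInf_le_csInf (OrderBot.bddBelow _) hM
      (fun γ hγ => kdimLE_of_surjective γ f hf hγ))

end Aux

/-- `R` is linearly equivalent to `Rᵐᵒᵖ` as a right `R`-module. -/
def opLinearEquivSelf (R : Type u) [Ring R] : R ≃ₗ[Rᵐᵒᵖ] Rᵐᵒᵖ where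
  toFun := MulOpposite.op
  invFun := MulOpposite.unop
  map_add' := fun _ _ => rfl
  map_smul' := fun _ _ => rfl
  left_inv := fun _ => rfl
  right_inv := fun _ => rfl

/-- Lemma 2: if `T` is a right weakly ideal invariant ideal with `|R/T|ᵣ = α = |R|ᵣ`
and `M` is a finitely generated right module of dimension `α` with an essential
`α`-Krull-homogeneous submodule `H` such that `HT = 0` and `|M/H|ᵣ < α`, then `MT = 0`. -/
theorem stmt3 {R : Type u} [Ring R] [IsNoetherian Rᵐᵒᵖ R]
    (α : WithBot Ordinal.{u}) (hR : kdim Rᵐᵒᵖ R = α)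
    (T : TwoSidedIdeal R) (hT : kdim Rᵐᵒᵖ (R ⧸ T.rightIdeal) = α)
    (hwii : ∀ L : Submodule Rᵐᵒᵖ R, kdim Rᵐᵒᵖ (R ⧸ L) < α →
      kdim Rᵐᵒᵖ (↥T.rightIdeal ⧸ (mulSpan L T).comap T.rightIdeal.subtype) < α)
    (M : Type u) [AddCommGroup M] [Module Rᵐᵒᵖ M] [Module.Finite Rᵐᵒᵖ M]
    (hM : kdim Rᵐᵒᵖ M = α)
    (H : Submodule Rᵐᵒᵖ M)
    (hess : ∀ N : Submodule Rᵐᵒᵖ M, N ≠ ⊥ → H ⊓ N ≠ ⊥)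
    (hhom : ∀ N : Submodule Rᵐᵒᵖ M, N ≤ H → N ≠ ⊥ → kdim Rᵐᵒᵖ ↥N = α)
    (hHT : ∀ h ∈ H, ∀ t ∈ T, (MulOpposite.op t) • h = (0 : M))
    (hMH : kdim Rᵐᵒᵖ (M ⧸ H) < α) :
    ∀ x : M, ∀ t ∈ T, (MulOpposite.op t) • x = (0 : M) := by
  classical
  haveI hNR : IsNoetherianRing Rᵐᵒᵖ := isNoetherian_of_linearEquiv (opLinearEquivSelf R)
  haveI hNM : IsNoetherian Rᵐᵒᵖ M := isNoetherian_of_isNoetherianRing_of_finite Rᵐᵒᵖ M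
  intro x t ht
  let ϕ : R →ₗ[Rᵐᵒᵖ] M :=
    (LinearMap.toSpanSingleton Rᵐᵒᵖ M x).comp (opLinearEquivSelf R).toLinearMap
  have hϕ : ∀ r : R, ϕ r = MulOpposite.op r • x := fun r => rfl
  set L : Submodule Rᵐᵒᵖ R := H.comap ϕ with hLdef
  -- Step 1 : `kdim (R ⧸ L) < α`
  have hL : kdim Rᵐᵒᵖ (R ⧸ L) < α := by
    have hker : LinearMap.ker (H.mkQ.comp ϕ) = L := by
      ext r
      simp [hLdef, Submodule.Quotient.mk_eq_zero]
    have hinj : Function.Injective (Submodule.liftQ L (H.mkQ.comp ϕ) (le_of_eq hker.symm)) :=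
      LinearMap.ker_eq_bot.mp (Submodule.ker_liftQ_eq_bot _ _ _ (le_of_eq hker))
    exact lt_of_le_of_lt (kdim_le_of_injective _ hinj (exists_kdimLE _)) hMH
  -- Step 2 : weak ideal invariance
  have hQ := hwii L hL
  -- Step 3 : the image of `T` under `r ↦ x·r`
  set ψ : ↥T.rightIdeal →ₗ[Rᵐᵒᵖ] M := ϕ.comp T.rightIdeal.subtype with hψdef
  set K : Submodule Rᵐᵒᵖ M := LinearMap.range ψ with hKdef
  have hmulspan : mulSpan L T ≤ LinearMap.ker ϕ := by
    rw [mulSpan, Submodule.span_le]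
    rintro y ⟨l, hl, t', ht', rfl⟩
    simp only [SetLike.mem_coe, LinearMap.mem_ker]
    have h1 : ϕ l ∈ H := hl
    calc ϕ (l * t') = MulOpposite.op (l * t') • x := hϕ _
      _ = (MulOpposite.op t' * MulOpposite.op l) • x := by rw [MulOpposite.op_mul]
      _ = MulOpposite.op t' • (MulOpposite.op l • x) := mul_smul _ _ _
      _ = 0 := hHT _ h1 t' ht'
  by_cases hK : K = ⊥
  · have hmem : ϕ t ∈ K := ⟨⟨t, ht⟩, rfl⟩
    rw [hK, Submodule.mem_bot] at hmem
    exact hmem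
  · exfalso
    have hKQ : kdim Rᵐᵒᵖ ↥K ≤
        kdim Rᵐᵒᵖ (↥T.rightIdeal ⧸ (mulSpan L T).comap T.rightIdeal.subtype) := by
      have hle : (mulSpan L T).comap T.rightIdeal.subtype ≤ LinearMap.ker ψ.rangeRestrict := by
        intro y hy
        rw [LinearMap.ker_rangeRestrict]
        exact hmulspan hy
      have hsurj : Function.Surjective (Submodule.liftQ _ ψ.rangeRestrict hle) := by
        intro z
        obtain ⟨w, hw⟩ := ψ.surjective_rangeRestrict z
        exact ⟨Submodule.Quotient.mk w, by simpa [Submodule.liftQ_apply] using hw⟩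
      exact kdim_le_of_surjective _ hsurj (exists_kdimLE _)
    have h1 : kdim Rᵐᵒᵖ ↥(H ⊓ K) = α := hhom (H ⊓ K) inf_le_left (hess K hK)
    have h2 : kdim Rᵐᵒᵖ ↥(H ⊓ K) ≤ kdim Rᵐᵒᵖ ↥K :=
      kdim_le_of_injective (Submodule.inclusion inf_le_right)
        (Submodule.inclusion_injective _) (exists_kdimLE _)
    exact absurd (lt_of_le_of_lt (h1 ▸ (h2.trans hKQ)) hQ) (lt_irrefl α)
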